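/- With H_m as above and along the curve (t,0,t,0,1,0,1,0) with controls u₁ = u₂ = 1, suppose the momenta satisfy the stationarity conditions q₁ = 0 and q₂ = 0 and the adjoint Hamilton equations. If p₀ = −1 then q₀(t) = t + B for some constant B and H_m(t) = −1 + t + B; if p₀ = 0 and q₀ = −1 then H_m(t) = −1. In neither case is H_m zero for almost every t ∈ [0,1]. -/

import Mathlib

open MeasureTheory

lemma ae_single_contra {P : ℝ → Prop} (a : ℝ)
    (hP : ∀ t, P t → t = a)
    (h : ∀ᵐ t ∂(volume.restrict (Set.Icc (0:ℝ) 1)), P t) : False := by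
  set μ := volume.restrict (Set.Icc (0:ℝ) 1)
  have h1 : μ {t | ¬ P t} = 0 := h
  have h2 : μ {a} = 0 := by
    refine le_antisymm ?_ zero_le
    calc μ {a} ≤ volume {a} := Measure.restrict_le_self _
    _ = 0 := Real.volume_singleton
  have huniv : μ Set.univ = 1 := by
    simp [μ, Real.volume_Icc]
  have : μ Set.univ ≤ μ {a} + μ {t | ¬ P t} := by
    refine le_trans (measure_mono ?_) (measure_union_le _ _)
    intro t _
    by_cases hp : P t
    · exact Or.inl (hP t hp)
    · exact Or.inr hp
  rw [huniv, h1, h2] at this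
  simp at this

/-- No normal momenta for the mechanical extremal (t,0,t,0,1,0,1,0) with u₁ = u₂ = 1:
if p₀ = −1 then q₀(t) = t + B and H_m = −1 + t + B; if p₀ = 0 and q₀ = −1 then
H_m = −1. In neither case is H_m zero almost everywhere on [0,1]. -/
theorem no_normal_momenta_mechanical (c : ℝ) (p₁ p₂ q₁ q₂ q₃ : ℝ → ℝ)
    -- stationarity conditions ∂H_m/∂u₁ = q₁ = 0 and ∂H_m/∂u₂ = q₂ = 0 along the curve
    (hq₁ : ∀ t, q₁ t = 0) (hq₂ : ∀ t, q₂ t = 0)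
    -- adjoint Hamilton equations for q₁, q₂ (along the curve x = 0, v₂ = 1, Γ(0) = 1)
    (hq₁' : ∀ t, HasDerivAt q₁ (-(p₁ t)) t)
    (hq₂' : ∀ t, HasDerivAt q₂ (-(p₂ t) + 2 * q₁ t * 1 * 1) t) :
    -- H_m along the curve: v₀ = 1, v₁ = 0, v₂ = 1, v₃ = 0, x = 0, u₁ = u₂ = 1, p₃ = c
    let Hm : ℝ → ℝ → ℝ → ℝ := fun p₀ q₀t t =>
      p₀ * 1 + q₀t + p₁ t * 0 + p₂ t * 1 + c * 0
        + q₁ t * (-1 * 1 ^ 2 - 1 * 0 ^ 2 + 1) + q₂ t * 1 * (1 - 0) + q₃ t * 0 ^ 2 * 1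
    -- case p₀ = −1 : q̇₀ = −p₀ = 1 forces q₀(t) = t + B, and H_m = −1 + t + B
    (∀ q₀ : ℝ → ℝ, (∀ t, HasDerivAt q₀ (-(-1 : ℝ)) t) →
      ∃ B : ℝ, (∀ t, q₀ t = t + B) ∧ (∀ t, Hm (-1) (q₀ t) t = -1 + t + B) ∧
        ¬ (∀ᵐ t ∂(volume.restrict (Set.Icc (0:ℝ) 1)), Hm (-1) (q₀ t) t = 0)) ∧
    -- case p₀ = 0, q₀ = −1 : H_m = −1
    ((∀ t : ℝ, Hm 0 (-1) t = -1) ∧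
      ¬ (∀ᵐ t ∂(volume.restrict (Set.Icc (0:ℝ) 1)), Hm 0 (-1) t = 0)) := by
  intro Hm
  have hq₁eq : q₁ = fun _ => (0:ℝ) := funext hq₁
  have hp₁ : ∀ t, p₁ t = 0 := by
    intro t
    have h0 : HasDerivAt q₁ 0 t := by rw [hq₁eq]; exact hasDerivAt_const t 0
    have := (hq₁' t).unique h0
    linarith
  have hp₂ : ∀ t, p₂ t = 0 := by
    intro t
    have h0 : HasDerivAt q₂ 0 t := by
      rw [funext hq₂]; exact hasDerivAt_const t 0
    have := (hq₂' t).unique h0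
    have h1 := hq₁ t
    nlinarith
  have hHm : ∀ p₀ q₀t t, Hm p₀ q₀t t = p₀ + q₀t := by
    intro p₀ q₀t t
    simp [Hm, hq₁, hq₂, hp₁, hp₂]
  constructor
  · intro q₀ hq₀'
    refine ⟨q₀ 0, ?_, ?_, ?_⟩
    · intro t
      have : ∀ s, HasDerivAt (fun s => q₀ s - s) 0 s := by
        intro s
        have := (hq₀' s).sub (hasDerivAt_id' s)
        norm_num at this; exact this
      have hc := is_const_of_deriv_eq_zero (f := fun s => q₀ s - s)
        (fun s => (this s).differentiableAt)
        (fun s => (this s).deriv) t 0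
      try simp only at hc
      linarith
    · intro t
      rw [hHm]
      have : ∀ s, HasDerivAt (fun s => q₀ s - s) 0 s := by
        intro s
        have := (hq₀' s).sub (hasDerivAt_id' s)
        norm_num at this; exact this
      have hc := is_const_of_deriv_eq_zero (f := fun s => q₀ s - s)
        (fun s => (this s).differentiableAt)
        (fun s => (this s).deriv) t 0
      try simp only at hc
      linarith
    · intro h
      refine ae_single_contra (1 - q₀ 0) (fun t ht => ?_) h
      rw [hHm] at ht
      have : ∀ s, HasDerivAt (fun s => q₀ s - s) 0 s := by
        intro s
        have := (hq₀' s).sub (hasDerivAt_id' s)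
        norm_num at this; exact this
      have hc := is_const_of_deriv_eq_zero (f := fun s => q₀ s - s)
        (fun s => (this s).differentiableAt)
        (fun s => (this s).deriv) t 0
      try simp only at hc
      linarith
  · constructor
    · intro t; rw [hHm]; ring
    · intro h
      have : ∀ᵐ t ∂(volume.restrict (Set.Icc (0:ℝ) 1)), False := by
        filter_upwards [h] with t ht
        rw [hHm] at ht; linarith
      rw [MeasureTheory.ae_iff] at this
      simp [Real.volume_Icc] at this
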